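/- Let $L$ be a linear subspace of $L_\infty = L_\infty(\Omega, \mathcal{A}, P_0)$. There exists a finitely additive probability $P$ with $P \sim P_0$ and $E_P(X) = 0$ for all $X \in L$ if and only if there exists a norm-open convex set $U \subset L_\infty$ such that $L_\infty^+ \subset U \cup \{0\}$ and $(L - L_\infty^+) \cap U = \emptyset$. -/

import Mathlib

open MeasureTheory Set

namespace FAP

variable {Ω : Type*}

/-- A finitely additive probability on the power set of `Ω`. -/
def IsFAP (P : Set Ω → ℝ) : Prop :=
  P univ = 1 ∧ (∀ A : Set Ω, 0 ≤ P A) ∧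
    ∀ A B : Set Ω, Disjoint A B → P (A ∪ B) = P A + P B

/-- A finitely additive probability on the σ-field of a measurable space `Ω`. -/
def IsFAPm [MeasurableSpace Ω] (P : Set Ω → ℝ) : Prop :=
  P univ = 1 ∧ (∀ A : Set Ω, MeasurableSet A → 0 ≤ P A) ∧
    ∀ A B : Set Ω, MeasurableSet A → MeasurableSet B → Disjoint A B →
      P (A ∪ B) = P A + P B

/-- The finitely additive integral of a bounded function `X` with respect to a
finitely additive probability `P`, defined via the layer-cake formula
(which agrees with the uniform-limit-of-simple-functions definition). -/
noncomputable def faIntegral (P : Set Ω → ℝ) (X : Ω → ℝ) : ℝ :=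
  (∫ t in Ioi (0 : ℝ), P {ω | t < X ω}) -
    (∫ t in Iio (0 : ℝ), (1 - P {ω | t < X ω}))

/-- `P` is absolutely continuous with respect to the (countably additive) measure `P₀`. -/
def AC [MeasurableSpace Ω] (P : Set Ω → ℝ) (P₀ : Measure Ω) : Prop :=
  ∀ A : Set Ω, MeasurableSet A → P₀ A = 0 → P A = 0

/-- `P` and `P₀` have the same null sets. -/
def EquivP [MeasurableSpace Ω] (P : Set Ω → ℝ) (P₀ : Measure Ω) : Prop :=
  ∀ A : Set Ω, MeasurableSet A → (P A = 0 ↔ P₀ A = 0)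

/-- `P` is pure: the only countably additive measure `Γ` with `0 ≤ Γ ≤ P` is `Γ = 0`. -/
def IsPure [MeasurableSpace Ω] (P : Set Ω → ℝ) : Prop :=
  ∀ Γ : Measure Ω, (∀ A : Set Ω, MeasurableSet A → Γ A ≤ ENNReal.ofReal (P A)) → Γ = 0

/-- The essential supremum `inf {a : P₀(X > a) = 0}` of a random variable `X`. -/
noncomputable def essSupR [MeasurableSpace Ω] (P₀ : Measure Ω) (X : Ω → ℝ) : ℝ :=
  sInf {a : ℝ | P₀ {ω | a < X ω} = 0}

end FAP

open FAP

namespace Stmt17Aux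

variable {Ω : Type*} [MeasurableSpace Ω] {P₀ : Measure Ω} {P : Set Ω → ℝ}

section basic

variable (hP : IsFAPm P)
include hP

lemma P_empty : P ∅ = 0 := by
  have h := hP.2.2 ∅ ∅ .empty .empty (by simp)
  simp only [Set.union_self] at h; linarith

lemma P_mono {A B : Set Ω} (hA : MeasurableSet A) (hB : MeasurableSet B) (hAB : A ⊆ B) :
    P A ≤ P B := by
  have h := hP.2.2 A (B \ A) hA (hB.diff hA) disjoint_sdiff_self_right
  rw [Set.union_diff_cancel hAB] at h
  have h2 := hP.2.1 (B \ A) (hB.diff hA)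
  linarith

lemma P_le_one {A : Set Ω} (hA : MeasurableSet A) : P A ≤ 1 := by
  have := P_mono hP hA MeasurableSet.univ (subset_univ A)
  rwa [hP.1] at this

lemma P_compl {A : Set Ω} (hA : MeasurableSet A) : P Aᶜ = 1 - P A := by
  have h := hP.2.2 A Aᶜ hA hA.compl disjoint_compl_right
  rw [Set.union_compl_self, hP.1] at h
  linarith

variable (hAC : AC P P₀)
include hAC

lemma P_mono_ae {A B : Set Ω} (hA : MeasurableSet A) (hB : MeasurableSet B)
    (h : P₀ (A \ B) = 0) : P A ≤ P B := by
  have h1 : P (A \ B) = 0 := hAC _ (hA.diff hB) h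
  have h2 := hP.2.2 (A ∩ B) (A \ B) (hA.inter hB) (hA.diff hB)
    (disjoint_sdiff_self_right.mono_left inter_subset_right)
  rw [Set.inter_union_diff] at h2
  have h3 := P_mono hP (hA.inter hB) hB inter_subset_right
  linarith

end basic

section levels

variable {X : Ω → ℝ} {B : Set Ω} {M R : ℝ}

lemma levMeas (hX : Measurable X) (t : ℝ) : MeasurableSet {ω | t < X ω} :=
  measurableSet_lt measurable_const hX

lemma phi_antitone (hP : IsFAPm P) (hX : Measurable X) (hB : MeasurableSet B) :
    Antitone (fun t => P ({ω | t < X ω} ∩ B)) := by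
  intro s t hst
  exact P_mono hP ((levMeas hX t).inter hB) ((levMeas hX s).inter hB)
    (inter_subset_inter_left _ (fun ω hω => lt_of_le_of_lt hst hω))

lemma phi_intInt (hP : IsFAPm P) (hX : Measurable X) (hB : MeasurableSet B) (a b : ℝ) :
    IntervalIntegrable (fun t => P ({ω | t < X ω} ∩ B)) volume a b :=
  ((phi_antitone hP hX hB).antitoneOn _).intervalIntegrable

variable (hP : IsFAPm P) (hAC : AC P P₀) (hX : Measurable X) (hB : MeasurableSet B)
  (hM : ∀ᵐ ω ∂P₀, |X ω| ≤ M)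
include hP hAC hX hB hM

lemma phi_eq_zero {t : ℝ} (ht : M ≤ t) : P ({ω | t < X ω} ∩ B) = 0 := by
  refine hAC _ ((levMeas hX t).inter hB) (measure_mono_null ?_ (ae_iff.mp hM))
  intro ω hω
  simp only [mem_setOf_eq, not_le]
  calc M ≤ t := ht
  _ < X ω := hω.1
  _ ≤ |X ω| := le_abs_self _

lemma phi_eq_PB {t : ℝ} (ht : t < -M) : P ({ω | t < X ω} ∩ B) = P B := by
  refine le_antisymm (P_mono hP ((levMeas hX t).inter hB) hB inter_subset_right) ?_
  refine P_mono_ae hP hAC hB ((levMeas hX t).inter hB) (measure_mono_null ?_ (ae_iff.mp hM))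
  intro ω hω
  simp only [mem_diff, mem_inter_iff, mem_setOf_eq, not_and] at hω
  simp only [mem_setOf_eq, not_le]
  have : ¬ t < X ω := fun h => hω.2 h hω.1
  have : X ω ≤ t := not_lt.mp this
  calc M = -(-M) := by ring
  _ < - X ω := by linarith
  _ ≤ |X ω| := neg_le_abs _

end levels


noncomputable def Jb (P : Set Ω → ℝ) (X : Ω → ℝ) (B : Set Ω) (R : ℝ) : ℝ :=
  (∫ t in (-R)..R, P ({ω | t < X ω} ∩ B)) - R * P B

section jb

variable {X : Ω → ℝ} {B : Set Ω} {M R : ℝ}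
variable (hP : IsFAPm P) (hAC : AC P P₀) (hX : Measurable X)
  (hM : ∀ᵐ ω ∂P₀, |X ω| ≤ M)
include hP hAC hX hM

/-- Bridge between the `Ioi/Iio` definition and the interval-integral form. -/
lemma faIntegral_eq_Jb (hM0 : 0 ≤ M) (hR : M < R) :
    faIntegral P X = Jb P X univ R := by
  have h0R : 0 < R := lt_of_le_of_lt hM0 hR
  set φ : ℝ → ℝ := fun t => P ({ω | t < X ω} ∩ univ) with hφ
  have hint : ∀ a b : ℝ, IntervalIntegrable φ volume a b :=
    phi_intInt hP hX MeasurableSet.univ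
  have hsimp : ∀ t : ℝ, P {ω | t < X ω} = φ t := by intro t; rw [hφ]; simp
  have step1 : (∫ t in Ioi (0:ℝ), P {ω | t < X ω}) = ∫ t in (0:ℝ)..R, φ t := by
    simp only [hsimp]
    rw [← Set.Ioc_union_Ioi_eq_Ioi h0R.le,
      setIntegral_union (Set.Ioc_disjoint_Ioi le_rfl) measurableSet_Ioi
        ((intervalIntegrable_iff_integrableOn_Ioc_of_le h0R.le).mp (hint 0 R))
        ((integrableOn_congr_fun (fun t ht => phi_eq_zero hP hAC hX MeasurableSet.univ hM
          (le_of_lt (lt_of_lt_of_le hR (le_of_lt ht)))) measurableSet_Ioi).mpr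
          (integrableOn_zero))]
    rw [setIntegral_congr_fun measurableSet_Ioi (fun t (ht : R < t) =>
      phi_eq_zero hP hAC hX MeasurableSet.univ hM (le_of_lt (lt_trans hR ht)))]
    rw [intervalIntegral.integral_of_le h0R.le]
    simp
  have hφone : ∀ t ∈ Iio (-M), φ t = 1 := by
    intro t ht
    rw [hφ]
    simp only
    rw [phi_eq_PB hP hAC hX MeasurableSet.univ hM ht, hP.1]
  have step2 : (∫ t in Iio (0:ℝ), (1 - P {ω | t < X ω})) = R - ∫ t in (-R)..(0:ℝ), φ t := by
    simp only [hsimp]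
    have hunion : Iio (-R) ∪ Ico (-R) (0:ℝ) = Iio 0 := Set.Iio_union_Ico_eq_Iio (by linarith)
    have hIcoInt : IntegrableOn (fun t => 1 - φ t) (Ico (-R) (0:ℝ)) volume := by
      rw [integrableOn_Ico_iff_integrableOn_Ioo]
      exact ((intervalIntegrable_iff_integrableOn_Ioo_of_le (by linarith)).mp
        ((intervalIntegrable_const).sub (hint (-R) 0)))
    have hzero : ∀ t ∈ Iio (-R), (1:ℝ) - φ t = 0 := by
      intro t ht
      have ht' : t < -M := by simp only [mem_Iio] at ht; linarith
      rw [hφone t ht']; ring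
    rw [← hunion, setIntegral_union (by
        intro s hs1 hs2 x hx
        have h1 := hs1 hx
        have h2 := hs2 hx
        simp only [mem_Iio] at h1
        simp only [mem_Ico] at h2
        linarith [h2.1]) measurableSet_Ico
      ((integrableOn_congr_fun hzero measurableSet_Iio).mpr integrableOn_zero) hIcoInt]
    rw [setIntegral_congr_fun measurableSet_Iio hzero]
    rw [integral_Ico_eq_integral_Ioo, ← integral_Ioc_eq_integral_Ioo,
      ← intervalIntegral.integral_of_le (by linarith : (-R:ℝ) ≤ 0)]
    rw [intervalIntegral.integral_sub intervalIntegrable_const (hint (-R) 0)]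
    simp
  rw [faIntegral, step1, step2, Jb, hP.1,
    ← intervalIntegral.integral_add_adjacent_intervals (hint (-R) 0) (hint 0 R)]
  ring


lemma Jb_indep (hB : MeasurableSet B) (hR : M < R) {R' : ℝ} (hR' : M < R') :
    Jb P X B R = Jb P X B R' := by
  have key : ∀ S T : ℝ, M < S → S ≤ T → Jb P X B S = Jb P X B T := by
    intro S T hS hST
    have hint : ∀ a b : ℝ, IntervalIntegrable (fun t => P ({ω | t < X ω} ∩ B)) volume a b :=
      phi_intInt hP hX hB
    have e1 : (∫ t in (-T)..(-S), P ({ω | t < X ω} ∩ B)) = (T - S) * P B := by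
      rw [intervalIntegral.integral_congr (g := fun _ => P B) (fun t ht => by
        rw [Set.uIcc_of_le (by linarith)] at ht
        exact phi_eq_PB hP hAC hX hB hM (by
          have := ht.2
          linarith))]
      rw [intervalIntegral.integral_const, smul_eq_mul]; ring
    have e2 : (∫ t in S..T, P ({ω | t < X ω} ∩ B)) = 0 := by
      rw [intervalIntegral.integral_congr (g := fun _ => 0) (fun t ht => by
        rw [Set.uIcc_of_le hST] at ht
        exact phi_eq_zero hP hAC hX hB hM (le_trans hS.le ht.1))]
      simp
    rw [Jb, Jb, ← intervalIntegral.integral_add_adjacent_intervals (hint (-T) (-S)) (hint (-S) T),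
      ← intervalIntegral.integral_add_adjacent_intervals (hint (-S) S) (hint S T), e1, e2]
    ring
  rcases le_total R R' with h | h
  · exact key R R' hR h
  · exact (key R' R hR' h).symm

omit hAC hM in
lemma Jb_split (hB : MeasurableSet B) :
    Jb P X univ R = Jb P X B R + Jb P X Bᶜ R := by
  have hpt : ∀ t : ℝ, P ({ω | t < X ω} ∩ univ)
      = P ({ω | t < X ω} ∩ B) + P ({ω | t < X ω} ∩ Bᶜ) := by
    intro t
    rw [inter_univ, ← hP.2.2 _ _ ((levMeas hX t).inter hB) ((levMeas hX t).inter hB.compl)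
      ((disjoint_compl_right).mono inter_subset_right inter_subset_right),
      Set.inter_union_compl]
  have : (∫ t in (-R)..R, P ({ω | t < X ω} ∩ univ))
      = (∫ t in (-R)..R, P ({ω | t < X ω} ∩ B)) + ∫ t in (-R)..R, P ({ω | t < X ω} ∩ Bᶜ) := by
    rw [← intervalIntegral.integral_add (phi_intInt hP hX hB _ _) (phi_intInt hP hX hB.compl _ _)]
    exact intervalIntegral.integral_congr (fun t _ => hpt t)
  have hPB : P univ = P B + P Bᶜ := by
    rw [P_compl hP hB, hP.1]; ring
  rw [Jb, Jb, Jb, this, hPB]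
  ring

omit hP hAC hX hM in
lemma lev_inter_congr {Y Z : Ω → ℝ} (hYZ : ∀ ω ∈ B, Y ω = Z ω) (t : ℝ) :
    {ω | t < Y ω} ∩ B = {ω | t < Z ω} ∩ B := by
  ext ω
  simp only [mem_inter_iff, mem_setOf_eq]
  constructor
  · rintro ⟨h1, h2⟩; exact ⟨by rw [← hYZ ω h2]; exact h1, h2⟩
  · rintro ⟨h1, h2⟩; exact ⟨by rw [hYZ ω h2]; exact h1, h2⟩

lemma Jb_shift (hB : MeasurableSet B) (d : ℝ) (hR : M + |d| < R) :
    Jb P (fun ω => X ω + d) B R = Jb P X B R + d * P B := by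
  have habs : 0 ≤ |d| := abs_nonneg d
  have hint : ∀ a b : ℝ, IntervalIntegrable (fun t => P ({ω | t < X ω} ∩ B)) volume a b :=
    phi_intInt hP hX hB
  have hset : ∀ t : ℝ, {ω | t < X ω + d} = {ω | t - d < X ω} := by
    intro t; ext ω; simp only [mem_setOf_eq]; constructor <;> intro h <;> linarith
  have e0 : (∫ t in (-R)..R, P ({ω | t < X ω + d} ∩ B))
      = ∫ t in (-R - d)..(R - d), P ({ω | t < X ω} ∩ B) := by
    rw [← intervalIntegral.integral_comp_sub_right (fun t => P ({ω | t < X ω} ∩ B)) d]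
    exact intervalIntegral.integral_congr (fun t _ => by rw [hset t])
  have e1 : (∫ t in (-R - d)..(-R), P ({ω | t < X ω} ∩ B)) = d * P B := by
    rw [intervalIntegral.integral_congr (g := fun _ => P B) (fun t ht => by
      refine phi_eq_PB hP hAC hX hB hM ?_
      have h1 : t ≤ max (-R - d) (-R) := by
        rw [Set.uIcc] at ht; exact ht.2
      have h2 : max (-R - d) (-R) ≤ -R + |d| := by
        have h3 := neg_abs_le d
        have h4 := abs_nonneg d
        exact max_le (by linarith) (by linarith)
      linarith)]
    rw [intervalIntegral.integral_const, smul_eq_mul]; ring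
  have e2 : (∫ t in (R - d)..R, P ({ω | t < X ω} ∩ B)) = 0 := by
    rw [intervalIntegral.integral_congr (g := fun _ => 0) (fun t ht => by
      refine phi_eq_zero hP hAC hX hB hM ?_
      have h1 : min (R - d) R ≤ t := by
        rw [Set.uIcc] at ht; exact ht.1
      have h2 : R - |d| ≤ min (R - d) R := by
        have h3 := le_abs_self d
        have h4 := abs_nonneg d
        exact le_min (by linarith) (by linarith)
      linarith)]
    simp
  have split1 : (∫ t in (-R - d)..(R - d), P ({ω | t < X ω} ∩ B))
      = (∫ t in (-R - d)..(-R), P ({ω | t < X ω} ∩ B))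
        + ∫ t in (-R)..(R - d), P ({ω | t < X ω} ∩ B) :=
    (intervalIntegral.integral_add_adjacent_intervals (hint _ _) (hint _ _)).symm
  have split2 : (∫ t in (-R)..R, P ({ω | t < X ω} ∩ B))
      = (∫ t in (-R)..(R - d), P ({ω | t < X ω} ∩ B))
        + ∫ t in (R - d)..R, P ({ω | t < X ω} ∩ B) :=
    (intervalIntegral.integral_add_adjacent_intervals (hint _ _) (hint _ _)).symm
  rw [Jb, Jb, e0, split1, e1, split2, e2]
  ring

/-- The key identity: adding `d·1_B` adds `d · P B` to the finitely additive integral. -/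
lemma faIntegral_add_indicator (hM0 : 0 ≤ M) (hB : MeasurableSet B) (d : ℝ) :
    faIntegral P (fun ω => X ω + B.indicator (fun _ => d) ω)
      = faIntegral P X + d * P B := by
  set Y : Ω → ℝ := fun ω => X ω + B.indicator (fun _ => d) ω with hY
  have hYmeas : Measurable Y := hX.add (measurable_const.indicator hB)
  have hMY : ∀ᵐ ω ∂P₀, |Y ω| ≤ M + |d| := by
    filter_upwards [hM] with ω hω
    have : |B.indicator (fun _ => d) ω| ≤ |d| := by
      by_cases h : ω ∈ B <;> simp [Set.indicator_apply, h, abs_nonneg]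
    calc |Y ω| ≤ |X ω| + |B.indicator (fun _ => d) ω| := abs_add_le _ _
    _ ≤ M + |d| := add_le_add hω this
  set R : ℝ := M + |d| + 1 with hR
  have hMR : M < R := by have := abs_nonneg d; rw [hR]; linarith
  have hMdR : M + |d| < R := by rw [hR]; linarith
  have bridgeY : faIntegral P Y = Jb P Y univ R :=
    faIntegral_eq_Jb hP hAC hYmeas hMY (by positivity) hMdR
  have bridgeX : faIntegral P X = Jb P X univ R :=
    faIntegral_eq_Jb hP hAC hX hM hM0 hMR
  have hJYB : Jb P Y B R = Jb P X B R + d * P B := by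
    have : Jb P Y B R = Jb P (fun ω => X ω + d) B R := by
      rw [Jb, Jb]
      congr 1
      refine intervalIntegral.integral_congr (fun t _ => ?_)
      rw [lev_inter_congr (Y := Y) (Z := fun ω => X ω + d)
        (fun ω hω => by simp [hY, Set.indicator_of_mem hω]) t]
    rw [this]
    exact Jb_shift hP hAC hX hM hB d hMdR
  have hJYBc : Jb P Y Bᶜ R = Jb P X Bᶜ R := by
    rw [Jb, Jb]
    congr 1
    refine intervalIntegral.integral_congr (fun t _ => ?_)
    rw [lev_inter_congr (Y := Y) (Z := X)
      (fun ω hω => by simp [hY, Set.indicator_of_notMem (Set.mem_compl_iff B ω |>.mp hω)]) t]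
  rw [bridgeY, bridgeX, Jb_split hP hYmeas hB, Jb_split hP hX hB, hJYB, hJYBc]
  ring

end jb
section calculus

variable {X Y : Ω → ℝ} {M M₁ M₂ : ℝ}

lemma ae_ne_vol (c : ℝ) : ∀ᵐ t : ℝ ∂volume, t ≠ c := by
  rw [ae_iff]
  have : {t : ℝ | ¬ t ≠ c} = {c} := by ext t; simp
  rw [this, Real.volume_singleton]

variable (hP : IsFAPm P) (hAC : AC P P₀)
include hP hAC

lemma faIntegral_const (c : ℝ) : faIntegral P (fun _ => c) = c := by
  have hc : (0:ℝ) ≤ |c| := abs_nonneg c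
  have hc1 : -(|c|+1) ≤ c := by have := neg_abs_le c; linarith
  have hc2 : c ≤ |c|+1 := by have := le_abs_self c; linarith
  set R : ℝ := |c| + 1 with hR
  have hb : faIntegral P (fun _ => c) = Jb P (fun _ => c) univ R := by
    refine faIntegral_eq_Jb hP hAC measurable_const ?_ hc (by rw [hR]; linarith)
    exact Filter.Eventually.of_forall (fun ω => le_refl |c|)
  rw [hb, Jb, hP.1,
    ← intervalIntegral.integral_add_adjacent_intervals
      (phi_intInt hP measurable_const MeasurableSet.univ (-R) c)
      (phi_intInt hP measurable_const MeasurableSet.univ c R)]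
  have e2 : (∫ t in c..R, P ({ω | t < (fun _ => c) ω} ∩ univ)) = 0 := by
    rw [intervalIntegral.integral_congr (g := fun _ => 0) (fun t ht => by
      rw [Set.uIcc_of_le hc2] at ht
      have : {ω : Ω | t < c} = ∅ := by
        ext ω; simp only [mem_setOf_eq, mem_empty_iff_false, iff_false, not_lt]; exact ht.1
      simp only [inter_univ]
      simp only [this]
      exact P_empty hP)]
    simp
  have e1 : (∫ t in (-R)..c, P ({ω | t < (fun _ => c) ω} ∩ univ)) = c + R := by
    have : (∫ t in (-R)..c, P ({ω | t < (fun _ => c) ω} ∩ univ))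
        = ∫ t in (-R)..c, (1:ℝ) := by
      apply intervalIntegral.integral_congr_ae
      filter_upwards [ae_ne_vol c] with t ht hmem
      rw [Set.uIoc_of_le (by linarith : -R ≤ c)] at hmem
      have htc : t < c := lt_of_le_of_ne hmem.2 ht
      have : {ω : Ω | t < c} = univ := by
        ext ω; simp only [mem_setOf_eq, mem_univ, iff_true]; exact htc
      simp only [inter_univ, this]
      exact hP.1
    rw [this]
    simp only [intervalIntegral.integral_const, smul_eq_mul, mul_one]
    ring
  rw [e1, e2]; ring

lemma faIntegral_mono [IsProbabilityMeasure P₀] (hX : Measurable X) (hY : Measurable Y)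
    (hMX : ∀ᵐ ω ∂P₀, |X ω| ≤ M₁) (hMY : ∀ᵐ ω ∂P₀, |Y ω| ≤ M₂)
    (hXY : ∀ᵐ ω ∂P₀, X ω ≤ Y ω) : faIntegral P X ≤ faIntegral P Y := by
  have hae : (Filter.NeBot (ae P₀)) := ae_neBot.mpr (IsProbabilityMeasure.ne_zero P₀)
  obtain ⟨ω₀, hω₀⟩ := hMX.exists
  have hM1 : 0 ≤ M₁ := le_trans (abs_nonneg _) hω₀
  obtain ⟨ω₁, hω₁⟩ := hMY.exists
  have hM2 : 0 ≤ M₂ := le_trans (abs_nonneg _) hω₁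
  set M : ℝ := max M₁ M₂ with hM
  set R : ℝ := M + 1 with hR
  have hMR : M < R := by rw [hR]; linarith
  have h0M : (0:ℝ) ≤ M := le_trans hM1 (le_max_left _ _)
  rw [faIntegral_eq_Jb hP hAC hX (hMX.mono fun ω h => le_trans h (le_max_left _ _)) h0M hMR,
    faIntegral_eq_Jb hP hAC hY (hMY.mono fun ω h => le_trans h (le_max_right _ _)) h0M hMR,
    Jb, Jb]
  have : (∫ t in (-R)..R, P ({ω | t < X ω} ∩ univ))
      ≤ ∫ t in (-R)..R, P ({ω | t < Y ω} ∩ univ) := by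
    apply intervalIntegral.integral_mono_on (by linarith)
      (phi_intInt hP hX MeasurableSet.univ _ _) (phi_intInt hP hY MeasurableSet.univ _ _)
    intro t _
    refine P_mono_ae hP hAC ((levMeas hX t).inter MeasurableSet.univ)
      ((levMeas hY t).inter MeasurableSet.univ) (measure_mono_null ?_ (ae_iff.mp hXY))
    intro ω hω
    simp only [inter_univ, mem_diff, mem_setOf_eq] at hω
    simp only [mem_setOf_eq, not_le]
    exact lt_of_le_of_lt (not_lt.mp hω.2) hω.1
  linarith

lemma faIntegral_congr_ae [IsProbabilityMeasure P₀] (hX : Measurable X) (hY : Measurable Y)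
    (hMX : ∀ᵐ ω ∂P₀, |X ω| ≤ M₁) (hMY : ∀ᵐ ω ∂P₀, |Y ω| ≤ M₂)
    (hXY : ∀ᵐ ω ∂P₀, X ω = Y ω) : faIntegral P X = faIntegral P Y :=
  le_antisymm
    (faIntegral_mono hP hAC hX hY hMX hMY (hXY.mono fun _ h => le_of_eq h))
    (faIntegral_mono hP hAC hY hX hMY hMX (hXY.mono fun _ h => ge_of_eq h))

lemma faIntegral_add_const (hX : Measurable X) (hM : ∀ᵐ ω ∂P₀, |X ω| ≤ M) (hM0 : 0 ≤ M)
    (c : ℝ) : faIntegral P (fun ω => X ω + c) = faIntegral P X + c := by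
  have := faIntegral_add_indicator hP hAC hX hM hM0 MeasurableSet.univ c
  simpa [Set.indicator_univ, hP.1] using this

lemma faIntegral_add_sum {ι : Type*} [DecidableEq ι] (F : Finset ι) (B : ι → Set Ω)
    (hB : ∀ k, MeasurableSet (B k)) (d : ι → ℝ) (hX : Measurable X)
    (hM : ∀ᵐ ω ∂P₀, |X ω| ≤ M) (hM0 : 0 ≤ M) :
    faIntegral P (fun ω => X ω + ∑ k ∈ F, (B k).indicator (fun _ => d k) ω)
      = faIntegral P X + ∑ k ∈ F, d k * P (B k) := by
  induction F using Finset.induction_on with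
  | empty => simp
  | @insert a F' ha ih =>
    have hX' : Measurable (fun ω => X ω + ∑ k ∈ F', (B k).indicator (fun _ => d k) ω) :=
      hX.add (Finset.measurable_sum F' (fun k _ => measurable_const.indicator (hB k)))
    have hM' : ∀ᵐ ω ∂P₀, |X ω + ∑ k ∈ F', (B k).indicator (fun _ => d k) ω|
        ≤ M + ∑ k ∈ F', |d k| := by
      filter_upwards [hM] with ω hω
      refine le_trans (abs_add_le _ _) (add_le_add hω ?_)
      refine le_trans (Finset.abs_sum_le_sum_abs _ _) (Finset.sum_le_sum fun k _ => ?_)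
      by_cases h : ω ∈ B k <;> simp [Set.indicator_apply, h, abs_nonneg]
    have hM0' : 0 ≤ M + ∑ k ∈ F', |d k| :=
      add_nonneg hM0 (Finset.sum_nonneg fun k _ => abs_nonneg _)
    have key := faIntegral_add_indicator hP hAC hX' hM' hM0' (hB a) (d a)
    have e : (fun ω => X ω + ∑ k ∈ insert a F', (B k).indicator (fun _ => d k) ω)
        = fun ω => (X ω + ∑ k ∈ F', (B k).indicator (fun _ => d k) ω)
            + (B a).indicator (fun _ => d a) ω :=
      funext fun ω => by rw [Finset.sum_insert ha]; ring
    rw [e, key, ih, Finset.sum_insert ha]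
    ring

end calculus

section discr

lemma abs_le_zero_of_forall_le {a : ℝ} (C : ℝ) (h : ∀ n : ℕ, 0 < n → |a| ≤ C / n) :
    a = 0 := by
  by_contra ha
  have h0 : 0 < |a| := abs_pos.mpr ha
  have hC : 0 ≤ C := by have := h 1 one_pos; simp at this; linarith
  obtain ⟨n, hn⟩ := exists_nat_gt (C / |a|)
  have hn0 : 0 < n := by
    by_contra hx
    push_neg at hx
    interval_cases n
    simp at hn
    have : 0 ≤ C / |a| := div_nonneg hC h0.le
    linarith
  have h1 := h n hn0
  have h2 : C / (n:ℝ) < |a| := by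
    rw [div_lt_iff₀ (by exact_mod_cast hn0)]
    rw [div_lt_iff₀ h0] at hn
    linarith [hn]
  linarith

lemma card_sandwich {M h x : ℝ} {n : ℕ} (hn : 0 < n) (hM : 0 < M) (hh : h = 2*M/n)
    (hx1 : -M ≤ x) (hx2 : x ≤ M) :
    -M + h * ((Finset.Icc 1 n).filter (fun k : ℕ => -M + (k:ℝ)*h < x)).card ≤ x ∧
      x ≤ -M + h * ((Finset.Icc 1 n).filter (fun k : ℕ => -M + (k:ℝ)*h < x)).card + h := by
  have hn0 : (0:ℝ) < n := by exact_mod_cast hn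
  have hh0 : 0 < h := by rw [hh]; positivity
  set r : ℝ := (x + M)/h with hr
  have hr0 : 0 ≤ r := by
    rw [hr]; apply div_nonneg _ hh0.le; linarith
  have hnh : (n:ℝ) * h = 2*M := by rw [hh]; field_simp
  have hrn : r ≤ n := by
    rw [hr, div_le_iff₀ hh0]
    calc x + M ≤ 2*M := by linarith
    _ = (n:ℝ)*h := hnh.symm
  have hiff : ∀ k : ℕ, (-M + (k:ℝ)*h < x) ↔ ((k:ℝ) < r) := by
    intro k
    rw [hr, lt_div_iff₀ hh0]
    constructor <;> intro h' <;> nlinarith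
  set S := (Finset.Icc 1 n).filter (fun k : ℕ => -M + (k:ℝ)*h < x) with hS
  set c := S.card with hc
  have hcr : (c:ℝ) ≤ r := by
    have hsub : S ⊆ Finset.Ico 1 (Nat.ceil r) := by
      intro k hk
      rw [hS, Finset.mem_filter, Finset.mem_Icc] at hk
      rw [Finset.mem_Ico]
      exact ⟨hk.1.1, Nat.lt_ceil.mpr ((hiff k).mp hk.2)⟩
    have hc1 : c ≤ Nat.ceil r - 1 := by
      have := Finset.card_le_card hsub
      rwa [Nat.card_Ico] at this
    rcases Nat.eq_zero_or_pos (Nat.ceil r) with h0 | h0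
    · have : c = 0 := by omega
      rw [this]; exact_mod_cast hr0
    · have hcast : (c:ℝ) ≤ (Nat.ceil r : ℝ) - 1 := by
        have : (c:ℝ) ≤ ((Nat.ceil r - 1 : ℕ) : ℝ) := by exact_mod_cast hc1
        rwa [Nat.cast_sub h0, Nat.cast_one] at this
      have := Nat.ceil_lt_add_one hr0
      linarith
  have hrc : r ≤ (c:ℝ) + 1 := by
    by_contra hcon
    push_neg at hcon
    have hsub2 : Finset.Icc 1 (c+1) ⊆ S := by
      intro k hk
      rw [Finset.mem_Icc] at hk
      have hkr : (k:ℝ) < r := by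
        have : (k:ℝ) ≤ (c:ℝ) + 1 := by exact_mod_cast hk.2
        linarith
      rw [hS, Finset.mem_filter, Finset.mem_Icc]
      refine ⟨⟨hk.1, ?_⟩, (hiff k).mpr hkr⟩
      have : (k:ℝ) ≤ (n:ℝ) := le_of_lt (lt_of_lt_of_le hkr hrn)
      exact_mod_cast this
    have := Finset.card_le_card hsub2
    rw [Nat.card_Icc] at this
    omega
  constructor
  · have : h * c ≤ h * r := by
      apply mul_le_mul_of_nonneg_left hcr hh0.le
    have hhr : h * r = x + M := by
      rw [hr, mul_div_cancel₀]
      exact hh0.ne'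
    linarith
  · have : h * r ≤ h * (c+1) := mul_le_mul_of_nonneg_left hrc hh0.le
    have hhr : h * r = x + M := by
      rw [hr, mul_div_cancel₀]
      exact hh0.ne'
    nlinarith

noncomputable def En (P : Set Ω → ℝ) (X : Ω → ℝ) (M : ℝ) (n : ℕ) : ℝ :=
  -M + (2*M/n) * ∑ k ∈ Finset.Icc 1 n, P {ω | (-M + k*(2*M/n)) < X ω}

noncomputable def discr (X : Ω → ℝ) (M : ℝ) (n : ℕ) : Ω → ℝ := fun ω =>
  -M + ∑ k ∈ Finset.Icc 1 n,
    ({ω' | (-M + k*(2*M/n)) < X ω'}).indicator (fun _ => 2*M/n) ω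

variable {X : Ω → ℝ} {M : ℝ} {n : ℕ}

lemma discr_eq_card (ω : Ω) :
    discr X M n ω = -M + (2*M/n) *
      ((Finset.Icc 1 n).filter (fun k : ℕ => -M + (k:ℝ)*(2*M/n) < X ω)).card := by
  rw [discr]
  congr 1
  rw [Finset.sum_indicator_eq_sum_filter]
  rw [Finset.sum_const, nsmul_eq_mul, mul_comm]
  congr 1

lemma discr_measurable (hX : Measurable X) : Measurable (discr X M n) :=
  measurable_const.add (Finset.measurable_sum _
    (fun k _ => measurable_const.indicator (levMeas hX _)))

lemma discr_bound (hM0 : 0 < M) (hn : 0 < n) : ∀ ω, |discr X M n ω| ≤ M := by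
  intro ω
  have hh0 : (0:ℝ) ≤ 2*M/n := by positivity
  have h1 : (0:ℝ) ≤ ∑ k ∈ Finset.Icc 1 n,
      ({ω' | (-M + k*(2*M/n)) < X ω'}).indicator (fun _ => 2*M/n) ω :=
    Finset.sum_nonneg fun k _ => Set.indicator_nonneg (fun _ _ => hh0) ω
  have h2 : ∑ k ∈ Finset.Icc 1 n,
      ({ω' | (-M + k*(2*M/n)) < X ω'}).indicator (fun _ => 2*M/n) ω ≤ 2*M := by
    have := Finset.sum_le_card_nsmul (Finset.Icc 1 n)
      (fun k => ({ω' | (-M + k*(2*M/n)) < X ω'}).indicator (fun _ => 2*M/n) ω)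
      (2*M/n) (fun k _ => Set.indicator_le_self' (fun _ _ => hh0) ω |>.trans (le_refl _))
    rw [Nat.card_Icc, nsmul_eq_mul] at this
    have hn0 : (0:ℝ) < n := by exact_mod_cast hn
    calc ∑ k ∈ Finset.Icc 1 n, ({ω' | (-M + k*(2*M/n)) < X ω'}).indicator (fun _ => 2*M/n) ω
        ≤ ((n + 1 - 1 : ℕ):ℝ) * (2*M/n) := this
    _ = 2*M := by simp; field_simp
  rw [discr, abs_le]
  constructor <;> linarith

lemma discr_sandwich_ae (hM : ∀ᵐ ω ∂P₀, |X ω| ≤ M) (hM0 : 0 < M) (hn : 0 < n) :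
    ∀ᵐ ω ∂P₀, discr X M n ω ≤ X ω ∧ X ω ≤ discr X M n ω + 2*M/n := by
  filter_upwards [hM] with ω hω
  rw [discr_eq_card]
  have h1 : -M ≤ X ω := by have := neg_abs_le (X ω); linarith [abs_le.mp hω |>.1]
  have h2 : X ω ≤ M := abs_le.mp hω |>.2
  exact card_sandwich hn hM0 rfl h1 h2

variable (hP : IsFAPm P) (hAC : AC P P₀)
include hP hAC

lemma discr_faIntegral (hX : Measurable X) (hM0 : 0 < M) :
    faIntegral P (discr X M n) = En P X M n := by
  classical
  have hconst : ∀ᵐ ω ∂P₀, |(fun _ => -M) ω| ≤ M :=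
    Filter.Eventually.of_forall (fun ω => by
      simp only [abs_neg, abs_of_pos hM0, le_refl])
  have key := faIntegral_add_sum hP hAC (X := fun _ => -M) (Finset.Icc 1 n)
    (fun k => {ω' | (-M + (k:ℝ)*(2*M/(n:ℝ))) < X ω'}) (fun k => levMeas hX _)
    (fun _ => 2*M/(n:ℝ)) measurable_const hconst hM0.le
  rw [faIntegral_const hP hAC] at key
  calc faIntegral P (discr X M n)
      = faIntegral P (fun ω => (fun _ => -M) ω + ∑ k ∈ Finset.Icc 1 n,
          ({ω' | (-M + (k:ℝ)*(2*M/(n:ℝ))) < X ω'}).indicator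
            (fun _ => 2*M/(n:ℝ)) ω) := rfl
  _ = -M + ∑ k ∈ Finset.Icc 1 n, (2*M/(n:ℝ)) * P {ω' | (-M + (k:ℝ)*(2*M/(n:ℝ))) < X ω'} :=
      key
  _ = En P X M n := by rw [En, Finset.mul_sum]

lemma faIntegral_sandwich [IsProbabilityMeasure P₀] (hX : Measurable X)
    (hM : ∀ᵐ ω ∂P₀, |X ω| ≤ M) (hM0 : 0 < M) (hn : 0 < n) :
    En P X M n ≤ faIntegral P X ∧ faIntegral P X ≤ En P X M n + 2*M/n := by
  have hs := discr_sandwich_ae (P₀ := P₀) hM hM0 hn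
  have hdm := discr_measurable (M := M) (n := n) hX
  have hdb : ∀ᵐ ω ∂P₀, |discr X M n ω| ≤ M :=
    Filter.Eventually.of_forall (discr_bound hM0 hn)
  constructor
  · rw [← discr_faIntegral hP hAC hX hM0]
    exact faIntegral_mono hP hAC hdm hX hdb hM (hs.mono fun ω h => h.1)
  · have hh0 : (0:ℝ) ≤ 2*M/n := by positivity
    have hdb' : ∀ᵐ ω ∂P₀, |discr X M n ω + 2*M/n| ≤ M + 2*M/n := by
      filter_upwards [hdb] with ω h
      calc |discr X M n ω + 2*M/n| ≤ |discr X M n ω| + |2*M/n| := abs_add_le _ _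
      _ ≤ M + 2*M/n := by rw [abs_of_nonneg hh0]; linarith
    have h1 : faIntegral P X ≤ faIntegral P (fun ω => discr X M n ω + 2*M/n) :=
      faIntegral_mono hP hAC hX (hdm.add measurable_const) hM hdb'
        (hs.mono fun ω h => h.2)
    have h2 : faIntegral P (fun ω => discr X M n ω + 2*M/n)
        = En P X M n + 2*M/n := by
      rw [faIntegral_add_const hP hAC hdm hdb hM0.le, discr_faIntegral hP hAC hX hM0]
    linarith

end discr

section linear

variable {X Y : Ω → ℝ} {M M₁ M₂ : ℝ} {n : ℕ}
variable (hP : IsFAPm P) (hAC : AC P P₀)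
include hP hAC

lemma faIntegral_add_discr (hX : Measurable X) (hMX : ∀ᵐ ω ∂P₀, |X ω| ≤ M₁)
    (hM1 : 0 ≤ M₁) (hY : Measurable Y) (hM0 : 0 < M) :
    faIntegral P (fun ω => X ω + discr Y M n ω) = faIntegral P X + En P Y M n := by
  classical
  have hX' : Measurable (fun ω => X ω + (-M)) := hX.add measurable_const
  have hMX' : ∀ᵐ ω ∂P₀, |X ω + (-M)| ≤ M₁ + M := by
    filter_upwards [hMX] with ω hω
    calc |X ω + (-M)| ≤ |X ω| + |(-M)| := abs_add_le _ _
    _ ≤ M₁ + M := by rw [abs_neg, abs_of_pos hM0]; linarith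
  have key := faIntegral_add_sum hP hAC (X := fun ω => X ω + (-M)) (Finset.Icc 1 n)
    (fun k => {ω' | (-M + (k:ℝ)*(2*M/(n:ℝ))) < Y ω'}) (fun k => levMeas hY _)
    (fun _ => 2*M/(n:ℝ)) hX' hMX' (by linarith)
  have e : (fun ω => X ω + discr Y M n ω)
      = (fun ω => (X ω + (-M)) + ∑ k ∈ Finset.Icc 1 n,
          ({ω' | (-M + (k:ℝ)*(2*M/(n:ℝ))) < Y ω'}).indicator (fun _ => 2*M/(n:ℝ)) ω) := by
    funext ω
    simp only [discr]
    ring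
  rw [e, key, faIntegral_add_const hP hAC hX hMX hM1, En, Finset.mul_sum]
  ring

variable [IsProbabilityMeasure P₀]

lemma faIntegral_add (hX : Measurable X) (hY : Measurable Y)
    (hMX : ∀ᵐ ω ∂P₀, |X ω| ≤ M₁) (hMY : ∀ᵐ ω ∂P₀, |Y ω| ≤ M₂) :
    faIntegral P (fun ω => X ω + Y ω) = faIntegral P X + faIntegral P Y := by
  have hae : (Filter.NeBot (ae P₀)) := ae_neBot.mpr (IsProbabilityMeasure.ne_zero P₀)
  obtain ⟨ω₀, hω₀⟩ := hMX.exists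
  have hM1 : 0 ≤ M₁ := le_trans (abs_nonneg _) hω₀
  set M : ℝ := max M₂ 1 with hMdef
  have hM0 : 0 < M := lt_of_lt_of_le one_pos (le_max_right _ _)
  have hMY' : ∀ᵐ ω ∂P₀, |Y ω| ≤ M := hMY.mono fun ω h => le_trans h (le_max_left _ _)
  have key0 : faIntegral P (fun ω => X ω + Y ω)
      - faIntegral P X - faIntegral P Y = 0 := by
    apply abs_le_zero_of_forall_le (4*M)
    intro n hn
    have hn0 : (0:ℝ) < n := by exact_mod_cast hn
    set h : ℝ := 2*M/(n:ℝ) with hh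
    have hh0 : 0 < h := by rw [hh]; positivity
    have sandY := faIntegral_sandwich hP hAC hY hMY' hM0 hn
    have hs := discr_sandwich_ae (P₀ := P₀) hMY' hM0 hn
    have key := faIntegral_add_discr hP hAC (n := n) hX hMX hM1 hY hM0
    have hdm := discr_measurable (X := Y) (M := M) (n := n) hY
    have hdb : ∀ᵐ ω ∂P₀, |discr Y M n ω| ≤ M :=
      Filter.Eventually.of_forall (discr_bound hM0 hn)
    have hXdm : Measurable (fun ω => X ω + discr Y M n ω) := hX.add hdm
    have hXdb : ∀ᵐ ω ∂P₀, |X ω + discr Y M n ω| ≤ M₁ + M := by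
      filter_upwards [hMX, hdb] with ω h1 h2
      calc |X ω + discr Y M n ω| ≤ |X ω| + |discr Y M n ω| := abs_add_le _ _
      _ ≤ M₁ + M := add_le_add h1 h2
    have hXYb : ∀ᵐ ω ∂P₀, |X ω + Y ω| ≤ M₁ + M := by
      filter_upwards [hMX, hMY'] with ω h1 h2
      calc |X ω + Y ω| ≤ |X ω| + |Y ω| := abs_add_le _ _
      _ ≤ M₁ + M := add_le_add h1 h2
    have low : faIntegral P (fun ω => X ω + discr Y M n ω)
        ≤ faIntegral P (fun ω => X ω + Y ω) :=
      faIntegral_mono hP hAC hXdm (hX.add hY) hXdb hXYb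
        ((hs.mono fun ω hω => by linarith [hω.1]))
    have hXdhb : ∀ᵐ ω ∂P₀, |(X ω + discr Y M n ω) + h| ≤ M₁ + M + h := by
      filter_upwards [hXdb] with ω h1
      calc |(X ω + discr Y M n ω) + h| ≤ |X ω + discr Y M n ω| + |h| := abs_add_le _ _
      _ ≤ M₁ + M + h := by rw [abs_of_pos hh0]; linarith
    have up : faIntegral P (fun ω => X ω + Y ω)
        ≤ faIntegral P (fun ω => (X ω + discr Y M n ω) + h) :=
      faIntegral_mono hP hAC (hX.add hY) (hXdm.add measurable_const) hXYb hXdhb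
        ((hs.mono fun ω hω => by
          have := hω.2
          rw [← hh] at this
          linarith))
    have upv : faIntegral P (fun ω => (X ω + discr Y M n ω) + h)
        = faIntegral P X + En P Y M n + h := by
      rw [faIntegral_add_const hP hAC hXdm hXdb (by linarith), key]
    rw [abs_le]
    have e4 : 4*M/(n:ℝ) = h + h := by rw [hh]; field_simp; ring
    rw [e4]
    rw [upv] at up
    rw [key] at low
    have sY2 := sandY.2
    have sY1 := sandY.1
    rw [← hh] at sY2
    constructor
    · linarith
    · linarith
  linarith [key0]

lemma faIntegral_neg (hX : Measurable X) (hMX : ∀ᵐ ω ∂P₀, |X ω| ≤ M₁) :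
    faIntegral P (fun ω => -X ω) = - faIntegral P X := by
  have hMN : ∀ᵐ ω ∂P₀, |-X ω| ≤ M₁ := hMX.mono fun ω h => by rwa [abs_neg]
  have := faIntegral_add hP hAC (Y := fun ω => -X ω) hX hX.neg hMX hMN
  have e : (fun ω => X ω + -X ω) = fun _ => (0:ℝ) := funext fun ω => by ring
  rw [e, faIntegral_const hP hAC] at this
  linarith

lemma En_smul {c : ℝ} (hc : 0 < c) :
    En P (fun ω => c * X ω) (c*M) n = c * En P X M n := by
  have hBk : ∀ k : ℕ, {ω | (-(c*M) + (k:ℝ)*(2*(c*M)/(n:ℝ))) < c * X ω}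
      = {ω | (-M + (k:ℝ)*(2*M/(n:ℝ))) < X ω} := by
    intro k
    ext ω
    simp only [mem_setOf_eq]
    rw [show -(c*M) + (k:ℝ)*(2*(c*M)/(n:ℝ)) = c*(-M + (k:ℝ)*(2*M/(n:ℝ))) by ring]
    exact mul_lt_mul_iff_right₀ hc
  rw [En, En]
  simp_rw [hBk]
  field_simp

lemma faIntegral_smul (hX : Measurable X) (hMX : ∀ᵐ ω ∂P₀, |X ω| ≤ M₁) (c : ℝ) :
    faIntegral P (fun ω => c * X ω) = c * faIntegral P X := by
  have hae : (Filter.NeBot (ae P₀)) := ae_neBot.mpr (IsProbabilityMeasure.ne_zero P₀)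
  obtain ⟨ω₀, hω₀⟩ := hMX.exists
  have hM1 : 0 ≤ M₁ := le_trans (abs_nonneg _) hω₀
  have main : ∀ c : ℝ, 0 < c → faIntegral P (fun ω => c * X ω) = c * faIntegral P X := by
    intro c hc
    set M : ℝ := max M₁ 1 with hMdef
    have hM0 : 0 < M := lt_of_lt_of_le one_pos (le_max_right _ _)
    have hMX' : ∀ᵐ ω ∂P₀, |X ω| ≤ M := hMX.mono fun ω h => le_trans h (le_max_left _ _)
    have hcM : 0 < c*M := by positivity
    have hcX : Measurable (fun ω => c * X ω) := hX.const_mul c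
    have hcXb : ∀ᵐ ω ∂P₀, |c * X ω| ≤ c*M := by
      filter_upwards [hMX'] with ω h
      rw [abs_mul, abs_of_pos hc]
      exact mul_le_mul_of_nonneg_left h hc.le
    have key0 : faIntegral P (fun ω => c * X ω) - c * faIntegral P X = 0 := by
      apply abs_le_zero_of_forall_le (4*(c*M))
      intro n hn
      have hn0 : (0:ℝ) < n := by exact_mod_cast hn
      have s1 := faIntegral_sandwich hP hAC hcX hcXb hcM hn
      have s2 := faIntegral_sandwich hP hAC hX hMX' hM0 hn
      rw [En_smul hP hAC hc] at s1
      have e4 : 4*(c*M)/(n:ℝ) = 2*(c*M)/(n:ℝ) + c*(2*M/(n:ℝ)) := by field_simp; ring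
      rw [abs_le, e4]
      have h1 := s2.1
      have h2 := s2.2
      have h3 : c * En P X M n ≤ c * faIntegral P X := mul_le_mul_of_nonneg_left h1 hc.le
      have h4 : c * faIntegral P X ≤ c * (En P X M n + 2*M/(n:ℝ)) :=
        mul_le_mul_of_nonneg_left h2 hc.le
      constructor
      · have := s1.1
        have e5 : c * (En P X M n + 2*M/(n:ℝ)) = c * En P X M n + c*(2*M/(n:ℝ)) := by ring
        rw [e5] at h4
        linarith
      · have := s1.2
        linarith
    linarith [key0]
  rcases lt_trichotomy c 0 with hc | hc | hc
  · have hpos := main (-c) (by linarith)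
    have e : (fun ω => c * X ω) = fun ω => -((-c) * X ω) := funext fun ω => by ring
    rw [e, faIntegral_neg hP hAC ((hX.const_mul (-c))) (by
      filter_upwards [hMX] with ω h
      rw [abs_mul, abs_of_pos (by linarith : (0:ℝ) < -c)]
      calc (-c) * |X ω| ≤ (-c) * M₁ := mul_le_mul_of_nonneg_left h (by linarith)
      _ = (-c) * M₁ := rfl), hpos]
    ring
  · rw [hc]
    have e : (fun ω => (0:ℝ) * X ω) = fun _ => (0:ℝ) := funext fun ω => by ring
    rw [e, faIntegral_const hP hAC]
    ring
  · exact main c hc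

end linear

section lp

variable [IsProbabilityMeasure P₀]

lemma ae_abs_le_norm (f : Lp ℝ ⊤ P₀) : ∀ᵐ ω ∂P₀, |(f : Ω → ℝ) ω| ≤ ‖f‖ := by
  have hne : eLpNormEssSup (f : Ω → ℝ) P₀ ≠ ⊤ := by
    rw [← eLpNorm_exponent_top]
    exact Lp.eLpNorm_ne_top f
  filter_upwards [ae_le_eLpNormEssSup (f := (f : Ω → ℝ)) (μ := P₀)] with ω hω
  rw [Lp.norm_def, eLpNorm_exponent_top]
  have := ENNReal.toReal_mono hne hω
  rwa [Real.enorm_eq_ofReal_abs, ENNReal.toReal_ofReal (abs_nonneg _)] at this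

lemma coeFn_fin_sum {ι : Type*} (F : Finset ι) (g : ι → Lp ℝ ⊤ P₀) :
    ⇑(∑ k ∈ F, g k) =ᵐ[P₀] fun ω => ∑ k ∈ F, (g k : Ω → ℝ) ω := by
  classical
  induction F using Finset.induction_on with
  | empty =>
    simp only [Finset.sum_empty]
    exact Lp.coeFn_zero _ _ _
  | @insert a F' ha ih =>
    rw [Finset.sum_insert ha]
    filter_upwards [Lp.coeFn_add (g a) (∑ k ∈ F', g k), ih] with ω h1 h2
    rw [h1]
    simp only [Pi.add_apply, h2, Finset.sum_insert ha]

variable (hP : IsFAPm P) (hAC : AC P P₀)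
include hP hAC

lemma faIntegral_Lp_add (f g : Lp ℝ ⊤ P₀) :
    faIntegral P ((f + g : Lp ℝ ⊤ P₀) : Ω → ℝ)
      = faIntegral P (f : Ω → ℝ) + faIntegral P (g : Ω → ℝ) := by
  have h1 : faIntegral P ((f + g : Lp ℝ ⊤ P₀) : Ω → ℝ)
      = faIntegral P (fun ω => (f : Ω → ℝ) ω + (g : Ω → ℝ) ω) := by
    refine faIntegral_congr_ae hP hAC (Lp.stronglyMeasurable _).measurable
      ((Lp.stronglyMeasurable f).measurable.add (Lp.stronglyMeasurable g).measurable)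
      (ae_abs_le_norm (f + g)) (M₂ := ‖f‖ + ‖g‖) ?_ ?_
    · filter_upwards [ae_abs_le_norm f, ae_abs_le_norm g] with ω hf hg
      calc |(f : Ω → ℝ) ω + (g : Ω → ℝ) ω| ≤ |(f : Ω → ℝ) ω| + |(g : Ω → ℝ) ω| :=
        abs_add_le _ _
      _ ≤ ‖f‖ + ‖g‖ := add_le_add hf hg
    · filter_upwards [Lp.coeFn_add f g] with ω h
      rw [h]; rfl
  rw [h1, faIntegral_add hP hAC (Lp.stronglyMeasurable f).measurable
    (Lp.stronglyMeasurable g).measurable (ae_abs_le_norm f) (ae_abs_le_norm g)]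

lemma faIntegral_Lp_smul (c : ℝ) (f : Lp ℝ ⊤ P₀) :
    faIntegral P ((c • f : Lp ℝ ⊤ P₀) : Ω → ℝ) = c * faIntegral P (f : Ω → ℝ) := by
  have h1 : faIntegral P ((c • f : Lp ℝ ⊤ P₀) : Ω → ℝ)
      = faIntegral P (fun ω => c * (f : Ω → ℝ) ω) := by
    refine faIntegral_congr_ae hP hAC (Lp.stronglyMeasurable _).measurable
      ((Lp.stronglyMeasurable f).measurable.const_mul c)
      (ae_abs_le_norm (c • f)) (M₂ := |c| * ‖f‖) ?_ ?_
    · filter_upwards [ae_abs_le_norm f] with ω hf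
      rw [abs_mul]
      exact mul_le_mul_of_nonneg_left hf (abs_nonneg c)
    · filter_upwards [Lp.coeFn_smul c f] with ω h
      rw [h]; rfl
  rw [h1, faIntegral_smul hP hAC (Lp.stronglyMeasurable f).measurable (ae_abs_le_norm f) c]

lemma faIntegral_Lp_zero : faIntegral P ((0 : Lp ℝ ⊤ P₀) : Ω → ℝ) = 0 := by
  have h1 : faIntegral P ((0 : Lp ℝ ⊤ P₀) : Ω → ℝ) = faIntegral P (fun _ => (0:ℝ)) := by
    refine faIntegral_congr_ae hP hAC (Lp.stronglyMeasurable _).measurable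
      measurable_const (ae_abs_le_norm 0) (M₂ := 1)
      (Filter.Eventually.of_forall fun ω => by norm_num) ?_
    filter_upwards [Lp.coeFn_zero ℝ ⊤ P₀] with ω h
    rw [h]; rfl
  rw [h1, faIntegral_const hP hAC]

lemma faIntegral_Lp_lip (f g : Lp ℝ ⊤ P₀) :
    faIntegral P (f : Ω → ℝ) ≤ faIntegral P (g : Ω → ℝ) + ‖f - g‖ := by
  have hle : ∀ᵐ ω ∂P₀, (f : Ω → ℝ) ω ≤ (g : Ω → ℝ) ω + ‖f - g‖ := by
    filter_upwards [ae_abs_le_norm (f - g), Lp.coeFn_sub f g] with ω h1 h2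
    rw [h2] at h1
    have := abs_le.mp h1
    simp only [Pi.sub_apply] at this
    linarith [this.2]
  have h2 : faIntegral P (f : Ω → ℝ)
      ≤ faIntegral P (fun ω => (g : Ω → ℝ) ω + ‖f - g‖) :=
    faIntegral_mono hP hAC (Lp.stronglyMeasurable f).measurable
      ((Lp.stronglyMeasurable g).measurable.add measurable_const)
      (ae_abs_le_norm f) (M₂ := ‖g‖ + ‖f - g‖)
      (by
        filter_upwards [ae_abs_le_norm g] with ω hg
        calc |(g : Ω → ℝ) ω + ‖f - g‖| ≤ |(g : Ω → ℝ) ω| + |‖f - g‖| := abs_add_le _ _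
        _ ≤ ‖g‖ + ‖f - g‖ := add_le_add hg (le_of_eq (abs_of_nonneg (norm_nonneg _)))) hle
  rwa [faIntegral_add_const hP hAC (Lp.stronglyMeasurable g).measurable
    (ae_abs_le_norm g) (norm_nonneg g)] at h2

lemma faIntegral_Lp_nonneg (f : Lp ℝ ⊤ P₀) (hf : ∀ᵐ ω ∂P₀, 0 ≤ (f : Ω → ℝ) ω) :
    0 ≤ faIntegral P (f : Ω → ℝ) := by
  have h := faIntegral_mono hP hAC measurable_const (Lp.stronglyMeasurable f).measurable
    (M₁ := 0) (Filter.Eventually.of_forall fun ω => by norm_num)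
    (ae_abs_le_norm f) hf
  rwa [faIntegral_const hP hAC] at h

end lp

section main

variable [IsProbabilityMeasure P₀]

lemma forward_dir (L : Submodule ℝ (Lp ℝ ⊤ P₀)) (hP : IsFAPm P) (hEq : EquivP P P₀)
    (hL : ∀ f ∈ L, faIntegral P (f : Ω → ℝ) = 0) :
    ∃ U : Set (Lp ℝ ⊤ P₀), IsOpen U ∧ Convex ℝ U ∧
      {f : Lp ℝ ⊤ P₀ | ∀ᵐ ω ∂P₀, 0 ≤ f ω} ⊆ U ∪ {0} ∧
      {g : Lp ℝ ⊤ P₀ | ∃ X ∈ L, ∃ Z : Lp ℝ ⊤ P₀,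
        (∀ᵐ ω ∂P₀, 0 ≤ Z ω) ∧ g = X - Z} ∩ U = ∅ := by
  have hAC : AC P P₀ := fun A hA h => (hEq A hA).mpr h
  set U : Set (Lp ℝ ⊤ P₀) := {g | 0 < faIntegral P (g : Ω → ℝ)} with hU
  refine ⟨U, ?_, ?_, ?_, ?_⟩
  · -- open
    rw [Metric.isOpen_iff]
    intro g hg
    refine ⟨faIntegral P (g : Ω → ℝ), hg, fun f hf => ?_⟩
    rw [Metric.mem_ball, dist_eq_norm] at hf
    have hlip := faIntegral_Lp_lip hP hAC g f
    have : ‖g - f‖ = ‖f - g‖ := norm_sub_rev g f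
    simp only [hU, mem_setOf_eq]
    rw [this] at hlip
    linarith
  · -- convex
    intro f hf g hg a b ha hb hab
    simp only [hU, mem_setOf_eq] at hf hg ⊢
    have e : faIntegral P ((a • f + b • g : Lp ℝ ⊤ P₀) : Ω → ℝ)
        = a * faIntegral P (f : Ω → ℝ) + b * faIntegral P (g : Ω → ℝ) := by
      rw [faIntegral_Lp_add hP hAC, faIntegral_Lp_smul hP hAC, faIntegral_Lp_smul hP hAC]
    rw [e]
    rcases eq_or_lt_of_le ha with ha0 | ha0
    · simp only [← ha0, zero_mul, zero_add] at hab ⊢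
      rw [hab, one_mul]
      exact hg
    · have h1 : 0 < a * faIntegral P (f : Ω → ℝ) := mul_pos ha0 hf
      have h2 : 0 ≤ b * faIntegral P (g : Ω → ℝ) := mul_nonneg hb hg.le
      linarith
  · -- positive cone
    intro f hf
    simp only [mem_setOf_eq] at hf
    by_cases h0 : f = 0
    · right; exact h0
    left
    simp only [hU, mem_setOf_eq]
    -- find ε with P₀ {ω | ε < f ω} ≠ 0
    have hex : ∃ n : ℕ, P₀ {ω | 1/((n:ℝ)+1) < (f : Ω → ℝ) ω} ≠ 0 := by
      by_contra hno
      push_neg at hno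
      have hpos0 : P₀ {ω | 0 < (f : Ω → ℝ) ω} = 0 := by
        have hsub : {ω | 0 < (f : Ω → ℝ) ω}
            ⊆ ⋃ n : ℕ, {ω | 1/((n:ℝ)+1) < (f : Ω → ℝ) ω} := by
          intro ω hω
          simp only [mem_setOf_eq] at hω
          obtain ⟨n, hn⟩ := exists_nat_gt (1/(f : Ω → ℝ) ω)
          refine mem_iUnion.mpr ⟨n, ?_⟩
          simp only [mem_setOf_eq]
          rw [div_lt_iff₀ (by positivity)]
          rw [div_lt_iff₀ hω] at hn
          nlinarith
        refine measure_mono_null hsub ?_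
        exact measure_iUnion_null fun n => hno n
      have hzero : (f : Ω → ℝ) =ᵐ[P₀] fun _ => (0:ℝ) := by
        filter_upwards [hf, measure_eq_zero_iff_ae_notMem.mp hpos0] with ω h1 h2
        simp only [mem_setOf_eq, not_lt] at h2
        exact le_antisymm h2 h1
      exact h0 (Lp.ext (hzero.trans (Lp.coeFn_zero ℝ ⊤ P₀).symm))
    obtain ⟨n, hn⟩ := hex
    set ε : ℝ := 1/((n:ℝ)+1) with hε
    have hε0 : 0 < ε := by rw [hε]; positivity
    set B : Set Ω := {ω | ε < (f : Ω → ℝ) ω} with hB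
    have hBm : MeasurableSet B := levMeas (Lp.stronglyMeasurable f).measurable ε
    have hPB : 0 < P B := by
      rcases lt_or_eq_of_le (hP.2.1 B hBm) with h | h
      · exact h
      · exact absurd ((hEq B hBm).mp h.symm) hn
    have key := faIntegral_add_indicator hP hAC (X := fun _ => (0:ℝ)) (M := 0)
      measurable_const (Filter.Eventually.of_forall fun ω => by norm_num) le_rfl hBm ε
    rw [faIntegral_const hP hAC, zero_add] at key
    have hmono : faIntegral P (fun ω => (0:ℝ) + B.indicator (fun _ => ε) ω)
        ≤ faIntegral P (f : Ω → ℝ) := by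
      refine faIntegral_mono hP hAC (measurable_const.add
        (measurable_const.indicator hBm)) (Lp.stronglyMeasurable f).measurable
        (M₁ := ε) ?_ (ae_abs_le_norm f) ?_
      · refine Filter.Eventually.of_forall fun ω => ?_
        rw [zero_add]
        by_cases h : ω ∈ B <;> simp [Set.indicator_apply, h, abs_of_pos hε0, hε0.le]
      · filter_upwards [hf] with ω h1
        rw [zero_add]
        by_cases h : ω ∈ B
        · rw [Set.indicator_of_mem h]
          exact le_of_lt h
        · rw [Set.indicator_of_notMem h]
          exact h1
    rw [key] at hmono
    have : 0 < ε * P B := mul_pos hε0 hPB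
    linarith
  · -- disjointness
    rw [Set.eq_empty_iff_forall_notMem]
    rintro g ⟨⟨X, hX, Z, hZ, hgXZ⟩, hgU⟩
    simp only [hU, mem_setOf_eq] at hgU
    have e1 : faIntegral P (g : Ω → ℝ)
        = faIntegral P (X : Ω → ℝ) + faIntegral P ((-Z : Lp ℝ ⊤ P₀) : Ω → ℝ) := by
      rw [hgXZ, sub_eq_add_neg, faIntegral_Lp_add hP hAC]
    have e2 : faIntegral P ((-Z : Lp ℝ ⊤ P₀) : Ω → ℝ)
        = - faIntegral P (Z : Ω → ℝ) := by
      have : (-Z : Lp ℝ ⊤ P₀) = (-1 : ℝ) • Z := by simp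
      rw [this, faIntegral_Lp_smul hP hAC]
      ring
    have e3 : 0 ≤ faIntegral P (Z : Ω → ℝ) := faIntegral_Lp_nonneg hP hAC Z hZ
    rw [e1, e2, hL X hX] at hgU
    linarith

set_option maxHeartbeats 1000000 in
lemma backward_dir (L : Submodule ℝ (Lp ℝ ⊤ P₀)) {U : Set (Lp ℝ ⊤ P₀)}
    (hopen : IsOpen U) (hconv : Convex ℝ U)
    (hpos : {f : Lp ℝ ⊤ P₀ | ∀ᵐ ω ∂P₀, 0 ≤ f ω} ⊆ U ∪ {0})
    (hdisj : {g : Lp ℝ ⊤ P₀ | ∃ X ∈ L, ∃ Z : Lp ℝ ⊤ P₀,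
        (∀ᵐ ω ∂P₀, 0 ≤ Z ω) ∧ g = X - Z} ∩ U = ∅) :
    ∃ P : Set Ω → ℝ, IsFAPm P ∧ EquivP P P₀ ∧
      ∀ f ∈ L, faIntegral P (f : Ω → ℝ) = 0 := by
  classical
  set C : Set (Lp ℝ ⊤ P₀) := {g | ∃ X ∈ L, ∃ Z : Lp ℝ ⊤ P₀,
    (∀ᵐ ω ∂P₀, 0 ≤ Z ω) ∧ g = X - Z} with hC
  have hCconv : Convex ℝ C := by
    rintro g₁ ⟨X₁, hX₁, Z₁, hZ₁, rfl⟩ g₂ ⟨X₂, hX₂, Z₂, hZ₂, rfl⟩ a b ha hb hab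
    refine ⟨a • X₁ + b • X₂, L.add_mem (L.smul_mem a hX₁) (L.smul_mem b hX₂),
      a • Z₁ + b • Z₂, ?_, ?_⟩
    · filter_upwards [Lp.coeFn_add (a • Z₁) (b • Z₂), Lp.coeFn_smul a Z₁,
        Lp.coeFn_smul b Z₂, hZ₁, hZ₂] with ω h1 h2 h3 h4 h5
      rw [h1]
      simp only [Pi.add_apply, h2, h3, Pi.smul_apply, smul_eq_mul]
      have := mul_nonneg ha h4
      have := mul_nonneg hb h5
      linarith
    · rw [smul_sub, smul_sub]
      abel
  have hdisj' : Disjoint U C := by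
    rw [Set.disjoint_iff_inter_eq_empty, Set.inter_comm]
    exact hdisj
  obtain ⟨φ, u, hφU, hφC⟩ := geometric_hahn_banach_open hconv hopen hCconv hdisj'
  set ψ : Lp ℝ ⊤ P₀ →L[ℝ] ℝ := -φ with hψdef
  set c : ℝ := -u with hcdef
  have hψU : ∀ g ∈ U, c < ψ g := by
    intro g hg
    have := hφU g hg
    simp only [hψdef, hcdef, ContinuousLinearMap.neg_apply]
    linarith
  have hψC : ∀ g ∈ C, ψ g ≤ c := by
    intro g hg
    have := hφC g hg
    simp only [hψdef, hcdef, ContinuousLinearMap.neg_apply]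
    linarith
  have hzero_mem : (0 : Lp ℝ ⊤ P₀) ∈ C := by
    refine ⟨0, L.zero_mem, 0, ?_, by rw [sub_zero]⟩
    filter_upwards [Lp.coeFn_zero ℝ ⊤ P₀] with ω h
    rw [h]; rfl
  have hc0 : 0 ≤ c := by
    have := hψC 0 hzero_mem
    rw [map_zero] at this
    linarith
  have hψL : ∀ X ∈ L, ψ X = 0 := by
    intro X hX
    by_contra hne
    have hr : ∀ r : ℝ, r * ψ X ≤ c := by
      intro r
      have hmem : r • X ∈ C := by
        refine ⟨r • X, L.smul_mem r hX, 0, ?_, by rw [sub_zero]⟩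
        filter_upwards [Lp.coeFn_zero ℝ ⊤ P₀] with ω h
        rw [h]; rfl
      have := hψC _ hmem
      rwa [ContinuousLinearMap.map_smul, smul_eq_mul] at this
    have := hr ((c+1)/ψ X)
    rw [div_mul_cancel₀ _ hne] at this
    linarith
  have hψpos : ∀ Z : Lp ℝ ⊤ P₀, (∀ᵐ ω ∂P₀, 0 ≤ (Z : Ω → ℝ) ω) → 0 ≤ ψ Z := by
    intro Z hZ
    by_contra hneg
    push_neg at hneg
    set r : ℝ := (c+1)/(-ψ Z) with hrdef
    have hr0 : 0 < r := by
      rw [hrdef]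
      apply div_pos (by linarith) (by linarith)
    have hmem : (0 : Lp ℝ ⊤ P₀) - r • Z ∈ C := by
      refine ⟨0, L.zero_mem, r • Z, ?_, rfl⟩
      filter_upwards [Lp.coeFn_smul r Z, hZ] with ω h1 h2
      rw [h1]
      simp only [Pi.smul_apply, smul_eq_mul]
      exact mul_nonneg hr0.le h2
    have hle := hψC _ hmem
    rw [map_sub, map_zero, ContinuousLinearMap.map_smul, smul_eq_mul] at hle
    have : r * (-ψ Z) = c + 1 := by
      rw [hrdef, div_mul_cancel₀]
      linarith
    have : 0 - r * ψ Z = c + 1 := by linarith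
    linarith
  -- the unit
  set one : Lp ℝ ⊤ P₀ :=
    indicatorConstLp ⊤ MeasurableSet.univ (measure_ne_top P₀ univ) (1:ℝ) with hone
  have hone_coe : (one : Ω → ℝ) =ᵐ[P₀] fun _ => (1:ℝ) := by
    have h : ((one : Lp ℝ ⊤ P₀) : Ω → ℝ) =ᵐ[P₀] (univ : Set Ω).indicator (fun _ => (1:ℝ)) :=
      indicatorConstLp_coeFn
    rw [Set.indicator_univ] at h
    exact h
  have haeNeBot : (Filter.NeBot (ae P₀)) := ae_neBot.mpr (IsProbabilityMeasure.ne_zero P₀)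
  have hone_ne : one ≠ 0 := by
    intro h
    have h2 : (one : Ω → ℝ) =ᵐ[P₀] fun _ => (0:ℝ) := by
      rw [h]
      filter_upwards [Lp.coeFn_zero ℝ ⊤ P₀] with ω hω
      rw [hω]; rfl
    obtain ⟨ω, hω⟩ := (hone_coe.symm.trans h2).exists
    simpa using hω
  have hone_mem : one ∈ U := by
    have h1 : one ∈ U ∪ {0} := hpos (by
      simp only [mem_setOf_eq]
      filter_upwards [hone_coe] with ω h
      rw [h]; norm_num)
    rcases h1 with h | h
    · exact h
    · exact absurd h hone_ne
  have hψ1 : 0 < ψ one := lt_of_le_of_lt hc0 (hψU one hone_mem)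
  -- the finitely additive probability
  set P : Set Ω → ℝ := fun A =>
    if hA : MeasurableSet A
      then ψ (indicatorConstLp ⊤ hA (measure_ne_top P₀ A) (1:ℝ)) / ψ one
      else 0 with hPdef
  have P_eq : ∀ (A : Set Ω) (hA : MeasurableSet A),
      P A = ψ (indicatorConstLp ⊤ hA (measure_ne_top P₀ A) (1:ℝ)) / ψ one :=
    fun A hA => dif_pos hA
  have hind_coe : ∀ (A : Set Ω) (hA : MeasurableSet A),
      ((indicatorConstLp ⊤ hA (measure_ne_top P₀ A) (1:ℝ) : Lp ℝ ⊤ P₀) : Ω → ℝ)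
        =ᵐ[P₀] A.indicator (fun _ => (1:ℝ)) :=
    fun A hA => indicatorConstLp_coeFn
  have hind_nonneg : ∀ (A : Set Ω) (hA : MeasurableSet A),
      ∀ᵐ ω ∂P₀, 0 ≤ ((indicatorConstLp ⊤ hA (measure_ne_top P₀ A) (1:ℝ)
        : Lp ℝ ⊤ P₀) : Ω → ℝ) ω := by
    intro A hA
    filter_upwards [hind_coe A hA] with ω h
    rw [h]
    exact Set.indicator_nonneg (fun _ _ => zero_le_one) ω
  have hψind_nonneg : ∀ (A : Set Ω) (hA : MeasurableSet A),
      0 ≤ ψ (indicatorConstLp ⊤ hA (measure_ne_top P₀ A) (1:ℝ)) :=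
    fun A hA => hψpos _ (hind_nonneg A hA)
  have hind_null : ∀ (A : Set Ω) (hA : MeasurableSet A), P₀ A = 0 →
      (indicatorConstLp ⊤ hA (measure_ne_top P₀ A) (1:ℝ) : Lp ℝ ⊤ P₀) = 0 := by
    intro A hA h0
    apply Lp.ext
    refine (hind_coe A hA).trans ?_
    refine Filter.EventuallyEq.trans ?_ (Lp.coeFn_zero ℝ ⊤ P₀).symm
    filter_upwards [measure_eq_zero_iff_ae_notMem.mp h0] with ω hω
    rw [Set.indicator_of_notMem hω]
    rfl
  have hind_memU : ∀ (A : Set Ω) (hA : MeasurableSet A), P₀ A ≠ 0 →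
      (indicatorConstLp ⊤ hA (measure_ne_top P₀ A) (1:ℝ) : Lp ℝ ⊤ P₀) ∈ U := by
    intro A hA h0
    have h1 : (indicatorConstLp ⊤ hA (measure_ne_top P₀ A) (1:ℝ) : Lp ℝ ⊤ P₀) ∈ U ∪ {0} :=
      hpos (hind_nonneg A hA)
    rcases h1 with h | h
    · exact h
    · exfalso
      apply h0
      rw [Set.mem_singleton_iff] at h
      have h2 : ((indicatorConstLp ⊤ hA (measure_ne_top P₀ A) (1:ℝ)
          : Lp ℝ ⊤ P₀) : Ω → ℝ) =ᵐ[P₀] fun _ => (0:ℝ) := by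
        rw [h]
        filter_upwards [Lp.coeFn_zero ℝ ⊤ P₀] with ω hω
        rw [hω]; rfl
      have h3 := (hind_coe A hA).symm.trans h2
      rw [measure_eq_zero_iff_ae_notMem]
      filter_upwards [h3] with ω hω
      intro hmem
      rw [Set.indicator_of_mem hmem] at hω
      simpa using hω
  have hPfa : IsFAPm P := by
    refine ⟨?_, ?_, ?_⟩
    · rw [P_eq univ MeasurableSet.univ]
      exact div_self hψ1.ne'
    · intro A hA
      rw [P_eq A hA]
      exact div_nonneg (hψind_nonneg A hA) hψ1.le
    · intro A B hA hB hd
      have hkey : (indicatorConstLp ⊤ (hA.union hB) (measure_ne_top P₀ (A ∪ B)) (1:ℝ)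
          : Lp ℝ ⊤ P₀)
          = indicatorConstLp ⊤ hA (measure_ne_top P₀ A) (1:ℝ)
            + indicatorConstLp ⊤ hB (measure_ne_top P₀ B) (1:ℝ) := by
        apply Lp.ext
        filter_upwards [hind_coe (A ∪ B) (hA.union hB),
          Lp.coeFn_add (indicatorConstLp ⊤ hA (measure_ne_top P₀ A) (1:ℝ))
            (indicatorConstLp ⊤ hB (measure_ne_top P₀ B) (1:ℝ)),
          hind_coe A hA, hind_coe B hB] with ω h1 h2 h3 h4
        rw [h1, h2, Set.indicator_union_of_disjoint hd]
        simp only [Pi.add_apply, h3, h4]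
      rw [P_eq _ (hA.union hB), P_eq A hA, P_eq B hB, hkey, map_add, add_div]
  have hEquiv : EquivP P P₀ := by
    intro A hA
    constructor
    · intro h
      by_contra h0
      have := hψU _ (hind_memU A hA h0)
      rw [P_eq A hA] at h
      have h1 : ψ (indicatorConstLp ⊤ hA (measure_ne_top P₀ A) (1:ℝ)) = 0 := by
        field_simp at h
        simpa using h
      rw [h1] at this
      linarith
    · intro h
      rw [P_eq A hA, hind_null A hA h, map_zero, zero_div]
  have hAC : AC P P₀ := fun A hA h => (hEquiv A hA).mpr h
  refine ⟨P, hPfa, hEquiv, ?_⟩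
  -- vanishing of the integral on L
  intro f hf
  have hψf : ψ f = 0 := hψL f hf
  set M : ℝ := ‖f‖ + 1 with hMdef
  have hM0 : 0 < M := by rw [hMdef]; positivity
  have hM : ∀ᵐ ω ∂P₀, |(f : Ω → ℝ) ω| ≤ M := by
    filter_upwards [ae_abs_le_norm f] with ω h
    rw [hMdef]; linarith
  have hfm : Measurable (f : Ω → ℝ) := (Lp.stronglyMeasurable f).measurable
  apply abs_le_zero_of_forall_le (4*M)
  intro n hn
  have hn0 : (0:ℝ) < n := by exact_mod_cast hn
  set h : ℝ := 2*M/(n:ℝ) with hhdef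
  have hh0 : 0 < h := by rw [hhdef]; positivity
  have sand := faIntegral_sandwich hPfa hAC hfm hM hM0 hn
  set Bk : ℕ → Set Ω := fun k => {ω | (-M + (k:ℝ)*(2*M/(n:ℝ))) < (f : Ω → ℝ) ω} with hBk
  have hBkm : ∀ k, MeasurableSet (Bk k) := fun k => levMeas hfm _
  set σ : Lp ℝ ⊤ P₀ := (-M) • one + ∑ k ∈ Finset.Icc 1 n,
    (2*M/(n:ℝ)) • indicatorConstLp ⊤ (hBkm k) (measure_ne_top P₀ (Bk k)) (1:ℝ) with hσ
  have hterm : ∀ᵐ ω ∂P₀, ∀ k ∈ Finset.Icc 1 n,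
      (((2*M/(n:ℝ)) • indicatorConstLp ⊤ (hBkm k) (measure_ne_top P₀ (Bk k)) (1:ℝ)
        : Lp ℝ ⊤ P₀) : Ω → ℝ) ω
        = (Bk k).indicator (fun _ => 2*M/(n:ℝ)) ω := by
    rw [Filter.eventually_all_finset]
    intro k _
    filter_upwards [Lp.coeFn_smul (2*M/(n:ℝ))
      (indicatorConstLp ⊤ (hBkm k) (measure_ne_top P₀ (Bk k)) (1:ℝ)),
      hind_coe (Bk k) (hBkm k)] with ω h1 h2
    rw [h1]
    simp only [Pi.smul_apply, h2, smul_eq_mul]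
    by_cases hω : ω ∈ Bk k
    · rw [Set.indicator_of_mem hω, Set.indicator_of_mem hω]
      simp
    · rw [Set.indicator_of_notMem hω, Set.indicator_of_notMem hω]
      simp
  have hσ_coe : (σ : Ω → ℝ) =ᵐ[P₀] discr (f : Ω → ℝ) M n := by
    filter_upwards [Lp.coeFn_add ((-M) • one) (∑ k ∈ Finset.Icc 1 n,
        (2*M/(n:ℝ)) • indicatorConstLp ⊤ (hBkm k) (measure_ne_top P₀ (Bk k)) (1:ℝ)),
      Lp.coeFn_smul (-M) one, hone_coe,
      coeFn_fin_sum (Finset.Icc 1 n) (fun k =>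
        (2*M/(n:ℝ)) • indicatorConstLp ⊤ (hBkm k) (measure_ne_top P₀ (Bk k)) (1:ℝ)),
      hterm] with ω h1 h2 h3 h4 h5
    rw [h1]
    simp only [Pi.add_apply, h2, Pi.smul_apply, h3, smul_eq_mul, mul_one, h4]
    rw [Finset.sum_congr rfl h5]
    simp only [discr, hBk]
  have hψσ : ψ σ = ψ one * En P (f : Ω → ℝ) M n := by
    have e1 : ψ σ = (-M) * ψ one + ∑ k ∈ Finset.Icc 1 n,
        (2*M/(n:ℝ)) * ψ (indicatorConstLp ⊤ (hBkm k) (measure_ne_top P₀ (Bk k)) (1:ℝ)) := by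
      rw [hσ, map_add, ContinuousLinearMap.map_smul, smul_eq_mul, map_sum]
      congr 1
      refine Finset.sum_congr rfl fun k _ => ?_
      rw [ContinuousLinearMap.map_smul, smul_eq_mul]
    have e2 : En P (f : Ω → ℝ) M n = -M + (2*M/(n:ℝ)) * ∑ k ∈ Finset.Icc 1 n,
        (ψ (indicatorConstLp ⊤ (hBkm k) (measure_ne_top P₀ (Bk k)) (1:ℝ)) / ψ one) := by
      rw [En]
      congr 1
      rw [Finset.mul_sum, Finset.mul_sum]
      refine Finset.sum_congr rfl fun k _ => ?_
      rw [P_eq _ (hBkm k)]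
    rw [e1, e2,
      show ∑ k ∈ Finset.Icc 1 n,
          (ψ (indicatorConstLp ⊤ (hBkm k) (measure_ne_top P₀ (Bk k)) (1:ℝ)) / ψ one)
        = (∑ k ∈ Finset.Icc 1 n,
            ψ (indicatorConstLp ⊤ (hBkm k) (measure_ne_top P₀ (Bk k)) (1:ℝ))) / ψ one
        from (Finset.sum_div _ _ _).symm,
      ← Finset.mul_sum, mul_add (ψ one),
      show ψ one * ((2*M/(n:ℝ)) * ((∑ k ∈ Finset.Icc 1 n,
          ψ (indicatorConstLp ⊤ (hBkm k) (measure_ne_top P₀ (Bk k)) (1:ℝ))) / ψ one))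
        = (2*M/(n:ℝ)) * (∑ k ∈ Finset.Icc 1 n,
          ψ (indicatorConstLp ⊤ (hBkm k) (measure_ne_top P₀ (Bk k)) (1:ℝ)))
        from by rw [mul_comm (ψ one), mul_assoc, div_mul_cancel₀ _ hψ1.ne']]
    ring
  have hdsand := discr_sandwich_ae (P₀ := P₀) (X := (f : Ω → ℝ)) hM hM0 hn
  have hlow : 0 ≤ ψ (f - σ) := by
    refine hψpos _ ?_
    filter_upwards [Lp.coeFn_sub f σ, hσ_coe, hdsand] with ω h1 h2 h3
    rw [h1]
    simp only [Pi.sub_apply, h2]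
    linarith [h3.1]
  have hup : 0 ≤ ψ (σ + h • one - f) := by
    refine hψpos _ ?_
    filter_upwards [Lp.coeFn_sub (σ + h • one) f, Lp.coeFn_add σ (h • one),
      Lp.coeFn_smul h one, hone_coe, hσ_coe, hdsand] with ω h1 h2 h3 h4 h5 h6
    rw [h1]
    simp only [Pi.sub_apply, h2, Pi.add_apply, h5, Pi.smul_apply, h3, h4,
      smul_eq_mul, mul_one]
    have := h6.2
    rw [← hhdef] at this
    linarith
  rw [map_sub] at hlow
  rw [map_sub, map_add, ContinuousLinearMap.map_smul, smul_eq_mul] at hup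
  rw [hψf] at hlow hup
  -- bounds on En
  have hEnle : En P (f : Ω → ℝ) M n ≤ 0 := by
    have : ψ σ ≤ 0 := by linarith
    rw [hψσ] at this
    nlinarith
  have hEnge : -h ≤ En P (f : Ω → ℝ) M n := by
    have : -(h * ψ one) ≤ ψ σ := by linarith
    rw [hψσ] at this
    nlinarith
  rw [abs_le]
  have e4 : 4*M/(n:ℝ) = h + h := by rw [hhdef]; field_simp; ring
  rw [e4]
  have s1 := sand.1
  have s2 := sand.2
  rw [← hhdef] at s2
  constructor <;> linarith

end main

end Stmt17Aux

/-- there is an equivalent martingale finitely additive probability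
iff there is a norm-open convex U ⊆ L∞ with L∞⁺ ⊆ U ∪ {0} and (L - L∞⁺) ∩ U = ∅. -/
theorem stmt17 {Ω : Type*} [MeasurableSpace Ω] (P₀ : Measure Ω) [IsProbabilityMeasure P₀]
    (L : Submodule ℝ (Lp ℝ ⊤ P₀)) :
    (∃ P : Set Ω → ℝ, FAP.IsFAPm P ∧ FAP.EquivP P P₀ ∧
        ∀ f ∈ L, FAP.faIntegral P (f : Ω → ℝ) = 0)
    ↔ ∃ U : Set (Lp ℝ ⊤ P₀), IsOpen U ∧ Convex ℝ U ∧
        {f : Lp ℝ ⊤ P₀ | ∀ᵐ ω ∂P₀, 0 ≤ f ω} ⊆ U ∪ {0} ∧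
        {g : Lp ℝ ⊤ P₀ | ∃ X ∈ L, ∃ Z : Lp ℝ ⊤ P₀,
          (∀ᵐ ω ∂P₀, 0 ≤ Z ω) ∧ g = X - Z} ∩ U = ∅ := by
  constructor
  · rintro ⟨P, hP, hEq, hL⟩
    exact Stmt17Aux.forward_dir L hP hEq hL
  · rintro ⟨U, hopen, hconv, hpos, hdisj⟩
    exact Stmt17Aux.backward_dir L hopen hconv hpos hdisj
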